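/- Let r_1, r_2 ≥ 1 and 0 < a < r_2, 0 < b < r_1, 0 < c < r_1, 0 < d < r_2 be integers such that A_+(z) = [[1+z^{r_1}, -z^a],[-z^b, 1+z^{r_2}]] and A_-(z) = [[1+z^{r_1}-z^c, 0],[0, 1+z^{r_2}-z^d]] satisfy A_+(z)A_-(z^{-1})^T = A_-(z)A_+(z^{-1})^T. Then r_1 = r_2 = a + b = 2c = 2d. -/

import Mathlib

open LaurentPolynomial Matrix

private lemma lapp_add (f g : LaurentPolynomial ℤ) (n : ℤ) : (f + g).coeff n = f.coeff n + g.coeff n :=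
  Finsupp.add_apply f.coeff g.coeff n

private lemma lapp_sub (f g : LaurentPolynomial ℤ) (n : ℤ) : (f - g).coeff n = f.coeff n - g.coeff n :=
  Finsupp.sub_apply f.coeff g.coeff n

private lemma lcoeff {f g : LaurentPolynomial ℤ} (h : f = g) (n : ℤ) : f.coeff n = g.coeff n := by rw [h]

set_option maxHeartbeats 2000000 in
theorem Apm_z_4 (r₁ r₂ a b c d : ℤ) (hr₁ : 1 ≤ r₁) (hr₂ : 1 ≤ r₂)
    (ha : 0 < a) (har : a < r₂) (hb : 0 < b) (hbr : b < r₁)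
    (hc : 0 < c) (hcr : c < r₁) (hd : 0 < d) (hdr : d < r₂)
    (hsymp :
      let Ap : Matrix (Fin 2) (Fin 2) (LaurentPolynomial ℤ) :=
        !![1 + T r₁, -T a; -T b, 1 + T r₂]
      let Am : Matrix (Fin 2) (Fin 2) (LaurentPolynomial ℤ) :=
        !![1 + T r₁ - T c, 0; 0, 1 + T r₂ - T d]
      Ap * (Am.map (invert (R := ℤ)))ᵀ = Am * (Ap.map (invert (R := ℤ)))ᵀ) :
    r₁ = r₂ ∧ r₁ = a + b ∧ r₁ = 2 * c ∧ r₁ = 2 * d := by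
  simp only [] at hsymp
  rw [← Matrix.ext_iff] at hsymp
  have h00 := hsymp 0 0
  have h01 := hsymp 0 1
  have h11 := hsymp 1 1
  simp [Matrix.mul_apply, Fin.sum_univ_succ, Matrix.map_apply] at h00 h01 h11
  simp only [add_mul, sub_mul, mul_add, mul_sub, one_mul, mul_one, ← T_add, ← T_zero]
    at h00 h01 h11
  have hc2 : r₁ = 2 * c := by
    have k := lcoeff h00 (-c)
    simp only [lapp_add, lapp_sub, T_apply] at k
    split_ifs at k <;> omega
  have hd2 : r₂ = 2 * d := by
    have k := lcoeff h11 (-d)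
    simp only [lapp_add, lapp_sub, T_apply] at k
    split_ifs at k <;> omega
  have hab : r₁ = a + b := by
    have k := lcoeff h01 a
    simp only [lapp_add, lapp_sub, T_apply] at k
    split_ifs at k <;> omega
  have hab2 : r₂ = a + b := by
    have k := lcoeff h01 (a - r₂)
    simp only [lapp_add, lapp_sub, T_apply] at k
    split_ifs at k <;> omega
  exact ⟨by omega, hab, hc2, by omega⟩
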